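/- Let (X,B,μ,T) be an invertible measure-preserving system, let P be a sub-σ-algebra of B with T⁻¹P ⊆ P, let f ∈ L²(μ), let m, n be positive integers, and set g = E(f | T^m P) and h = E(g | T^{−n} P). If a_i, a_j are nonnegative integers with a_i − m ≥ n + a_j, then ∫ (g∘T^{a_i})·(g∘T^{a_j}) dμ = ∫ (g∘T^{a_i})·(h∘T^{a_j}) dμ and ∫ (h∘T^{a_i})·(g∘T^{a_j}) dμ = ∫ (h∘T^{a_i})·(h∘T^{a_j}) dμ. -/

import Mathlib

open Filter MeasureTheory Topology

section Aux

variable {X : Type*}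

/-- The iterate of a measurable equivalence as a measurable equivalence. -/
def iterEquiv [MeasurableSpace X] (T : X ≃ᵐ X) : ℕ → (X ≃ᵐ X)
  | 0 => MeasurableEquiv.refl X
  | k + 1 => (iterEquiv T k).trans T

lemma coe_iterEquiv [MeasurableSpace X] (T : X ≃ᵐ X) : ∀ k, ⇑(iterEquiv T k) = (⇑T)^[k]
  | 0 => rfl
  | k + 1 => by
    funext x
    simp only [iterEquiv, MeasurableEquiv.coe_trans, Function.comp_apply,
      coe_iterEquiv T k, Function.iterate_succ_apply']

/-- The conditional expectation of an `MemLp 2` function is `MemLp 2`. -/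
lemma memℒp_two_condexp_aux {m : MeasurableSpace X} [m0 : MeasurableSpace X] (hm : m ≤ m0) (μ : Measure X)
    [IsFiniteMeasure μ] {f : X → ℝ} (hf : MemLp f 2 μ) :
    MemLp (μ[f|m]) 2 μ := by
  set F : Lp ℝ 2 μ := hf.toLp f with hF
  have hFf : (F : X → ℝ) =ᵐ[μ] f := hf.coeFn_toLp
  have h_eq : (condExpL2 ℝ ℝ hm F : X → ℝ) =ᵐ[μ] μ[f|m] := by
    refine ae_eq_condExp_of_forall_setIntegral_eq hm (hf.integrable one_le_two)
      (fun s hs hμs =>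
        ((Lp.memLp ((condExpL2 ℝ ℝ hm F : Lp ℝ 2 μ))).integrable one_le_two).integrableOn)
      (fun s hs hμs => ?_) ?_
    · rw [integral_condExpL2_eq hm F hs hμs.ne]
      exact setIntegral_congr_ae (hm s hs) (hFf.mono fun x hx _ => hx)
    · exact lpMeas.aestronglyMeasurable _
  exact (Lp.memLp ((condExpL2 ℝ ℝ hm F : Lp ℝ 2 μ))).ae_eq h_eq

/-- Conditional expectation commutes with composition by a measure-preserving
measurable equivalence, with the σ-algebra pulled back. -/
lemma condexp_comp_measurePreserving_aux {m : MeasurableSpace X} [m0 : MeasurableSpace X]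
    {μ : Measure X}
    [IsFiniteMeasure μ] (e : X ≃ᵐ X) (he : MeasurePreserving (⇑e) μ μ)
    (hm : m ≤ m0) {g : X → ℝ} (hg : Integrable g μ) :
    (fun x => (μ[g|m]) (e x)) =ᵐ[μ] μ[(fun x => g (e x)) | m.comap e] := by
  have hm' : m.comap (⇑e) ≤ m0 :=
    (MeasurableSpace.comap_mono hm).trans e.measurable.comap_le
  have hme : @Measurable X X (m.comap ⇑e) m ⇑e := fun s hs => ⟨s, hs, rfl⟩
  have hint1 : Integrable (fun x => g (e x)) μ :=
    memLp_one_iff_integrable.mp ((memLp_one_iff_integrable.mpr hg).comp_measurePreserving he)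
  have hint2 : Integrable (fun x => (μ[g|m]) (e x)) μ :=
    memLp_one_iff_integrable.mp
      ((memLp_one_iff_integrable.mpr integrable_condExp).comp_measurePreserving he)
  refine ae_eq_condExp_of_forall_setIntegral_eq hm' hint1
    (fun s hs hμs => hint2.integrableOn) ?_ ?_
  · rintro s ⟨t, ht, rfl⟩ hμs
    exact (he.setIntegral_preimage_emb e.measurableEmbedding (μ[g|m]) t).trans
      ((setIntegral_condExp hm hg ht).trans
        (he.setIntegral_preimage_emb e.measurableEmbedding g t).symm)
  · exact (stronglyMeasurable_condExp.comp_measurable hme).aestronglyMeasurable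

end Aux

/-- Claim 2 in the proof of Theorem 3.2 of the paper: with `g = E(f | T^m P)` and
`h = E(g | T^{-n} P)`, if `a_i - m ≥ n + a_j` then
`∫ g∘T^{a_i} · g∘T^{a_j} dμ = ∫ g∘T^{a_i} · h∘T^{a_j} dμ` and
`∫ h∘T^{a_i} · g∘T^{a_j} dμ = ∫ h∘T^{a_i} · h∘T^{a_j} dμ`.
Here `T^m P = {T^m A : A ∈ P}` is realized as `MeasurableSpace.comap (T.symm)^[m] P`
and `T^{-n} P = MeasurableSpace.comap T^[n] P`. -/
theorem condexp_iterate_product_integrals_claim2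
    {X : Type*} (P : MeasurableSpace X) [m0 : MeasurableSpace X]
    (μ : Measure X) [IsProbabilityMeasure μ]
    (T : X ≃ᵐ X) (hT : MeasurePreserving (⇑T) μ μ)
    (hPm : P ≤ m0) (hTP : MeasurableSpace.comap (⇑T) P ≤ P)
    (f : X → ℝ) (hf : MemLp f 2 μ)
    (m n : ℕ) (hm : 0 < m) (hn : 0 < n)
    (g h : X → ℝ)
    (hg : g = μ[f| MeasurableSpace.comap ((⇑T.symm)^[m]) P])
    (hh : h = μ[g| MeasurableSpace.comap ((⇑T)^[n]) P])
    (ai aj : ℕ) (hij : n + aj + m ≤ ai) :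
    (∫ x, g ((⇑T)^[ai] x) * g ((⇑T)^[aj] x) ∂μ
      = ∫ x, g ((⇑T)^[ai] x) * h ((⇑T)^[aj] x) ∂μ) ∧
    (∫ x, h ((⇑T)^[ai] x) * g ((⇑T)^[aj] x) ∂μ
      = ∫ x, h ((⇑T)^[ai] x) * h ((⇑T)^[aj] x) ∂μ) := by
  -- the decreasing family `T^{-k} P`
  set M : ℕ → MeasurableSpace X := fun k => MeasurableSpace.comap ((⇑T)^[k]) P with hM
  have hM_le : ∀ k, M k ≤ m0 := fun k =>
    (MeasurableSpace.comap_mono hPm).trans (T.measurable.iterate k).comap_le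
  have hM_anti : Antitone M := by
    refine antitone_nat_of_succ_le fun k => ?_
    have h1 : (⇑T)^[k + 1] = ⇑T ∘ (⇑T)^[k] := Function.iterate_succ' _ _
    calc M (k + 1) = (P.comap ⇑T).comap ((⇑T)^[k]) := by
          rw [hM]; rw [MeasurableSpace.comap_comp, ← h1]
      _ ≤ P.comap ((⇑T)^[k]) := MeasurableSpace.comap_mono hTP
  -- σ-algebra of `g`
  have hPm' : MeasurableSpace.comap ((⇑T.symm)^[m]) P ≤ m0 :=
    (MeasurableSpace.comap_mono hPm).trans (T.symm.measurable.iterate m).comap_le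
  have hgm : StronglyMeasurable[MeasurableSpace.comap ((⇑T.symm)^[m]) P] g := by
    rw [hg]; exact stronglyMeasurable_condExp
  have hhm : StronglyMeasurable[M n] h := by
    rw [hh]; exact stronglyMeasurable_condExp
  -- MemLp facts
  have hgL2 : MemLp g 2 μ := by rw [hg]; exact memℒp_two_condexp_aux hPm' μ hf
  have hhL2 : MemLp h 2 μ := by rw [hh]; exact memℒp_two_condexp_aux (hM_le n) μ hgL2
  have hcompL2 : ∀ (u : X → ℝ), MemLp u 2 μ → ∀ k : ℕ,
      MemLp (fun x => u ((⇑T)^[k] x)) 2 μ :=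
    fun u hu k => hu.comp_measurePreserving (hT.iterate k)
  -- `g ∘ T^{ai}` is `A`-measurable
  have hcomp_sm : ∀ (u : X → ℝ) (mu : MeasurableSpace X), StronglyMeasurable[mu] u →
      ∀ k : ℕ, StronglyMeasurable[mu.comap ((⇑T)^[k])] (fun x => u ((⇑T)^[k] x)) := by
    intro u mu hu k
    have hmek : @Measurable X X (mu.comap ((⇑T)^[k])) mu ((⇑T)^[k]) := fun s hs => ⟨s, hs, rfl⟩
    exact hu.comp_measurable hmek
  have key_iter : ∀ x, (⇑T.symm)^[m] ((⇑T)^[ai] x) = (⇑T)^[ai - m] x := by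
    intro x
    have hmai : ai = m + (ai - m) := by omega
    have h1 : (⇑T)^[ai] x = (⇑T)^[m] ((⇑T)^[ai - m] x) := by
      conv_lhs => rw [hmai, Function.iterate_add_apply]
    rw [h1]
    exact (Function.LeftInverse.iterate T.symm_apply_apply m) _
  have hu1 : StronglyMeasurable[M (n + aj)] (fun x => g ((⇑T)^[ai] x)) := by
    have h1 := hcomp_sm g _ hgm ai
    have h2 : (MeasurableSpace.comap ((⇑T.symm)^[m]) P).comap ((⇑T)^[ai]) = M (ai - m) := by
      rw [MeasurableSpace.comap_comp, hM]
      congr 1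
      funext x
      exact key_iter x
    rw [h2] at h1
    exact h1.mono (hM_anti (by omega))
  have hu2 : StronglyMeasurable[M (n + aj)] (fun x => h ((⇑T)^[ai] x)) := by
    have h1 := hcomp_sm h _ hhm ai
    have h2 : (M n).comap ((⇑T)^[ai]) = M (n + ai) := by
      rw [hM, MeasurableSpace.comap_comp, ← Function.iterate_add]
    rw [h2] at h1
    exact h1.mono (hM_anti (by omega))
  -- the key conditional expectation identity
  have hkey : (fun x => h ((⇑T)^[aj] x)) =ᵐ[μ] μ[(fun x => g ((⇑T)^[aj] x)) | M (n + aj)] := by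
    have he : MeasurePreserving (⇑(iterEquiv T aj)) μ μ := by
      rw [coe_iterEquiv]; exact hT.iterate aj
    have hco : ⇑(iterEquiv T aj) = (⇑T)^[aj] := coe_iterEquiv T aj
    have := condexp_comp_measurePreserving_aux (iterEquiv T aj) he (hM_le n)
      (hgL2.integrable one_le_two)
    rw [hco] at this
    have hAeq : (M n).comap ((⇑T)^[aj]) = M (n + aj) := by
      rw [hM, MeasurableSpace.comap_comp, ← Function.iterate_add]
    rw [hAeq] at this
    refine EventuallyEq.trans ?_ this
    rw [hh]
  -- main computation
  have main : ∀ u : X → ℝ, StronglyMeasurable[M (n + aj)] u → MemLp u 2 μ →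
      ∫ x, u x * g ((⇑T)^[aj] x) ∂μ = ∫ x, u x * h ((⇑T)^[aj] x) ∂μ := by
    intro u hum huL2
    set v : X → ℝ := fun x => g ((⇑T)^[aj] x) with hv
    have hvL2 : MemLp v 2 μ := hcompL2 g hgL2 aj
    have hvint : Integrable v μ := hvL2.integrable one_le_two
    have hmul : MemLp (u • v) 1 μ := by
      refine MemLp.smul (hpqr := ⟨?_⟩) hvL2 huL2
      rw [ENNReal.inv_two_add_inv_two, inv_one]
    have hint : Integrable (u * v) μ := by
      have := hmul.integrable le_rfl
      simpa [Pi.smul_apply, smul_eq_mul, Pi.mul_def] using this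
    have h1 : ∫ x, u x * v x ∂μ = ∫ x, (μ[u * v | M (n + aj)]) x ∂μ := by
      rw [integral_condExp (hM_le (n + aj))]
      rfl
    have h2 : μ[u * v | M (n + aj)] =ᵐ[μ] u * μ[v | M (n + aj)] :=
      condExp_mul_of_stronglyMeasurable_left hum hint hvint
    have h3 : u * μ[v | M (n + aj)] =ᵐ[μ] fun x => u x * h ((⇑T)^[aj] x) := by
      filter_upwards [hkey] with x hx
      rw [Pi.mul_apply, hx]
    calc ∫ x, u x * v x ∂μ = ∫ x, (μ[u * v | M (n + aj)]) x ∂μ := h1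
      _ = ∫ x, (u * μ[v | M (n + aj)]) x ∂μ := integral_congr_ae h2
      _ = ∫ x, u x * h ((⇑T)^[aj] x) ∂μ := integral_congr_ae h3
  exact ⟨main _ hu1 (hcompL2 g hgL2 ai), main _ hu2 (hcompL2 h hhL2 ai)⟩
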